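/- Classical vanishing of the coherent correction: if H = Σ_n ε_n |n⟩⟨n| and each jump operator has the form L_k = √γ_{mₖnₖ} |mₖ⟩⟨nₖ| (one operator for each ordered pair m≠n with rate γ_{mn}), with stationary state π diagonal in the basis {|n⟩}, then Σ_k ℓ_k (L_k π L_k† − ½{L_k† L_k, π}) = 0, where ℓ_k = (tr(L_k π L_k†) − tr(L_{k*} π L_{k*}†))/(tr(L_k π L_k†) + tr(L_{k*} π L_{k*}†)) and k* labels the reverse jump (n,m) for k = (m,n). -/

import Mathlib

open Matrix

private lemma sbm_mul_diag {d : ℕ} (m n : Fin d) (f : Fin d → ℂ) (a : ℂ) :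
    single m n a * diagonal f = single m n (a * f n) := by
  ext i j
  simp [Matrix.mul_apply, Matrix.single, Matrix.diagonal, Matrix.of_apply, ite_and]
  aesop

private lemma diag_mul_sbm {d : ℕ} (m n : Fin d) (f : Fin d → ℂ) (a : ℂ) :
    diagonal f * single m n a = single m n (f m * a) := by
  ext i j
  simp [Matrix.mul_apply, Matrix.single, Matrix.diagonal, Matrix.of_apply, ite_and]
  aesop

private lemma sbm_conjT {d : ℕ} (m n : Fin d) (a : ℂ) :
    (single m n a)ᴴ = single n m (star a) := by
  ext i j
  simp [Matrix.conjTranspose_apply, Matrix.single, Matrix.of_apply, ite_and]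
  aesop

theorem classical_coherent_correction_vanishes {d : ℕ}
    (γ : Fin d → Fin d → ℝ) (p : Fin d → ℝ)
    (hγ : ∀ m n, m ≠ n → 0 < γ m n)
    (hp : ∀ j, 0 < p j) (hnorm : ∑ j, p j = 1)
    (hstat : ∀ m, ∑ n ∈ Finset.univ.erase m, (γ m n * p n - γ n m * p m) = 0) :
    ∑ m, ∑ n, (if m = n then (0 : Matrix (Fin d) (Fin d) ℂ)
      else
        (((γ m n * p n - γ n m * p m) / (γ m n * p n + γ n m * p m) : ℝ) : ℂ) •
          (let L : Matrix (Fin d) (Fin d) ℂ :=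
            ((Real.sqrt (γ m n) : ℝ) : ℂ) • Matrix.single m n 1
           let π : Matrix (Fin d) (Fin d) ℂ := Matrix.diagonal fun j => ((p j : ℝ) : ℂ)
           L * π * Lᴴ - (1 / 2 : ℂ) • (Lᴴ * L * π + π * (Lᴴ * L)))) = 0 := by
  set g : Fin d → Fin d → ℝ := fun m n =>
    (γ m n * p n - γ n m * p m) / (γ m n * p n + γ n m * p m) * (γ m n * p n) with hg
  -- Step 1: each summand computes to a diagonal rank-2 combination
  have hkey : ∀ m n : Fin d, m ≠ n →
      (((γ m n * p n - γ n m * p m) / (γ m n * p n + γ n m * p m) : ℝ) : ℂ) •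
        (let L : Matrix (Fin d) (Fin d) ℂ :=
            ((Real.sqrt (γ m n) : ℝ) : ℂ) • Matrix.single m n 1
         let π : Matrix (Fin d) (Fin d) ℂ := Matrix.diagonal fun j => ((p j : ℝ) : ℂ)
         L * π * Lᴴ - (1 / 2 : ℂ) • (Lᴴ * L * π + π * (Lᴴ * L)))
      = ((g m n : ℝ) : ℂ) • (single m m (1:ℂ) - single n n 1) := by
    intro m n hmn
    have hss : ((Real.sqrt (γ m n) : ℝ) : ℂ) * ((Real.sqrt (γ m n) : ℝ) : ℂ)
        = ((γ m n : ℝ) : ℂ) := by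
      rw [← Complex.ofReal_mul, Real.mul_self_sqrt (hγ m n hmn).le]
    simp only [smul_mul_assoc, mul_smul_comm, sbm_mul_diag, diag_mul_sbm,
      conjTranspose_smul, sbm_conjT, star_one, Complex.star_def, Complex.conj_ofReal,
      single_mul_single_same, smul_smul, smul_single, smul_sub, smul_add,
      smul_eq_mul, mul_one, one_mul, _root_.map_one]
    rw [← single_add]
    congr 1 <;> congr 1 <;>
      (simp only [hg]
       set l : ℝ := (γ m n * p n - γ n m * p m) / (γ m n * p n + γ n m * p m) with hl
       clear_value l
       push_cast
       linear_combination ((l : ℝ) : ℂ) * ((p n : ℝ) : ℂ) * hss)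
  -- Step 2: antisymmetrized coefficient
  have hgdiff : ∀ m n : Fin d, m ≠ n → g m n - g n m = γ m n * p n - γ n m * p m := by
    intro m n hmn
    have h1 : (0:ℝ) < γ m n * p n := mul_pos (hγ m n hmn) (hp n)
    have h2 : (0:ℝ) < γ n m * p m := mul_pos (hγ n m (Ne.symm hmn)) (hp m)
    have hd : γ m n * p n + γ n m * p m ≠ 0 := by positivity
    have hd' : γ n m * p m + γ m n * p n ≠ 0 := by positivity
    simp only [hg]
    field_simp
    ring
  -- Step 3: rewrite the whole sum
  have step1 : ∑ m, ∑ n, (if m = n then (0 : Matrix (Fin d) (Fin d) ℂ)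
      else
        (((γ m n * p n - γ n m * p m) / (γ m n * p n + γ n m * p m) : ℝ) : ℂ) •
          (let L : Matrix (Fin d) (Fin d) ℂ :=
            ((Real.sqrt (γ m n) : ℝ) : ℂ) • Matrix.single m n 1
           let π : Matrix (Fin d) (Fin d) ℂ := Matrix.diagonal fun j => ((p j : ℝ) : ℂ)
           L * π * Lᴴ - (1 / 2 : ℂ) • (Lᴴ * L * π + π * (Lᴴ * L))))
      = ∑ m, ∑ n, ((if m = n then (0 : Matrix (Fin d) (Fin d) ℂ)
            else ((g m n : ℝ) : ℂ) • single m m (1:ℂ))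
          - (if m = n then (0 : Matrix (Fin d) (Fin d) ℂ)
            else ((g m n : ℝ) : ℂ) • single n n (1:ℂ))) := by
    refine Finset.sum_congr rfl fun m _ => Finset.sum_congr rfl fun n _ => ?_
    by_cases h : m = n
    · simp [h]
    · rw [if_neg h, if_neg h, if_neg h, hkey m n h, smul_sub]
  rw [step1]
  have step2 : ∑ m, ∑ n, ((if m = n then (0 : Matrix (Fin d) (Fin d) ℂ)
            else ((g m n : ℝ) : ℂ) • single m m (1:ℂ))
          - (if m = n then (0 : Matrix (Fin d) (Fin d) ℂ)
            else ((g m n : ℝ) : ℂ) • single n n (1:ℂ)))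
      = (∑ m, ∑ n, (if m = n then (0 : Matrix (Fin d) (Fin d) ℂ)
            else ((g m n : ℝ) : ℂ) • single m m (1:ℂ)))
        - ∑ m, ∑ n, (if m = n then (0 : Matrix (Fin d) (Fin d) ℂ)
            else ((g m n : ℝ) : ℂ) • single n n (1:ℂ)) := by
    rw [← Finset.sum_sub_distrib]
    exact Finset.sum_congr rfl fun m _ => by rw [← Finset.sum_sub_distrib]
  rw [step2]
  have step3 : ∑ m, ∑ n, (if m = n then (0 : Matrix (Fin d) (Fin d) ℂ)
            else ((g m n : ℝ) : ℂ) • single n n (1:ℂ))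
      = ∑ m, ∑ n, (if m = n then (0 : Matrix (Fin d) (Fin d) ℂ)
            else ((g n m : ℝ) : ℂ) • single m m (1:ℂ)) := by
    rw [Finset.sum_comm]
    refine Finset.sum_congr rfl fun m _ => Finset.sum_congr rfl fun n _ => ?_
    by_cases h : m = n
    · simp [h]
    · rw [if_neg (fun hnm => h hnm.symm), if_neg h]
  rw [step3, ← Finset.sum_sub_distrib]
  refine Finset.sum_eq_zero fun m _ => ?_
  rw [← Finset.sum_sub_distrib]
  have hrow : ∀ n : Fin d, ((if m = n then (0 : Matrix (Fin d) (Fin d) ℂ)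
          else ((g m n : ℝ) : ℂ) • single m m (1:ℂ))
        - (if m = n then (0 : Matrix (Fin d) (Fin d) ℂ)
          else ((g n m : ℝ) : ℂ) • single m m (1:ℂ)))
      = (if m = n then (0:ℂ) else ((g m n - g n m : ℝ) : ℂ)) • single m m (1:ℂ) := by
    intro n
    by_cases h : m = n
    · simp [h]
    · rw [if_neg h, if_neg h, if_neg h, ← sub_smul, ← Complex.ofReal_sub]
  simp only [hrow, ← Finset.sum_smul]
  convert zero_smul ℂ (single m m (1:ℂ)) using 2
  rw [← Finset.add_sum_erase Finset.univ _ (Finset.mem_univ m), if_pos rfl, zero_add]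
  have hcg : ∑ n ∈ Finset.univ.erase m, (if m = n then (0:ℂ) else ((g m n - g n m : ℝ) : ℂ))
      = ∑ n ∈ Finset.univ.erase m, ((γ m n * p n - γ n m * p m : ℝ) : ℂ) := by
    refine Finset.sum_congr rfl fun n hn => ?_
    have hnm : m ≠ n := fun h => (Finset.mem_erase.mp hn).1 h.symm
    rw [if_neg hnm, hgdiff m n hnm]
  rw [hcg, ← Complex.ofReal_sum, hstat m, Complex.ofReal_zero]
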